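/- Under the assumptions of the sampling/safety reconstruction theorem (so that every ρ-small d-simplex of the flat Delaunay complex is delloc in P at scale ρ and has circumradius at most ε, with 2R(σ) ≤ ρ), every d-simplex σ of FlatDel(P,ρ) is a Gabriel simplex of P, and consequently FlatDel(P,ρ) ⊆ Del(P). More precisely: if σ is delloc in P at scale ρ and 2R(σ) ≤ ρ, then σ is a Gabriel simplex of P. -/

import Mathlib

open Metric Set
open scoped Classical

noncomputable section

abbrev Euc (N : ℕ) := EuclideanSpace ℝ (Fin N)

variable {N : ℕ}

/-- The medial axis of `A`: points with at least two closest points in `A`. -/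
def medialAxis (A : Set (Euc N)) : Set (Euc N) :=
  {x | ∃ a ∈ A, ∃ b ∈ A, a ≠ b ∧ dist x a = infDist x A ∧ dist x b = infDist x A}

/-- `p` is a nearest point of `A` to `x`. -/
def IsNearestPt (A : Set (Euc N)) (x p : Euc N) : Prop :=
  p ∈ A ∧ dist x p = infDist x A

/-- `π` is a nearest-point projection map onto `A`, defined off the medial axis. -/
def IsNearestPtProj (A : Set (Euc N)) (π : Euc N → Euc N) : Prop :=
  ∀ x, x ∉ medialAxis A → IsNearestPt A x (π x)

/-- The angle between two linear subspaces: sup over unit vectors of `V₀` of the inf of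
angles with unit vectors of `V₁`. -/
def subAngle (V₀ V₁ : Submodule ℝ (Euc N)) : ℝ :=
  sSup {a | ∃ v₀ ∈ V₀, ‖v₀‖ = 1 ∧
    a = sInf {b | ∃ v₁ ∈ V₁, ‖v₁‖ = 1 ∧ b = InnerProductGeometry.angle v₀ v₁}}

/-- Angle between two affine subspaces. -/
def affAngle (H₀ H₁ : AffineSubspace ℝ (Euc N)) : ℝ :=
  subAngle H₀.direction H₁.direction

/-- Angle between the line through `u, v` and the affine subspace `H`. -/
def lineAngle (u v : Euc N) (H : AffineSubspace ℝ (Euc N)) : ℝ :=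
  subAngle (Submodule.span ℝ {v - u}) H.direction

/-- Orthogonal projection onto an affine subspace (the identity if `H` is empty). -/
def projA (H : AffineSubspace ℝ (Euc N)) (x : Euc N) : Euc N :=
  if h : (H : Set (Euc N)).Nonempty then
    h.choose + (Submodule.orthogonalProjection H.direction (x - h.choose) : Euc N)
  else x

/-- The minimal height of a simplex (over all vertices, distance to opposite facet). -/
def height (σ : Finset (Euc N)) : ℝ :=
  sInf ((fun v => infDist v (affineSpan ℝ ((σ.erase v : Finset (Euc N)) : Set (Euc N)))) '' σ)

/-- `σ` is a non-degenerate simplex: its vertices are affinely independent. -/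
def Nondegenerate (σ : Finset (Euc N)) : Prop :=
  AffineIndependent ℝ (fun p : σ => (p : Euc N))

/-- The sphere centered at `z` of radius `r` circumscribes `σ`. -/
def IsCircum (σ : Finset (Euc N)) (z : Euc N) (r : ℝ) : Prop :=
  ∀ p ∈ σ, dist p z = r

/-- `(z, r)` is the smallest circumscribing sphere of `σ`. -/
def IsMinCircum (σ : Finset (Euc N)) (z : Euc N) (r : ℝ) : Prop :=
  IsCircum σ z r ∧ ∀ z' r', IsCircum σ z' r' → r ≤ r'

/-- `(c, r)` is the smallest enclosing ball of `σ`. -/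
def IsSEB (σ : Finset (Euc N)) (c : Euc N) (r : ℝ) : Prop :=
  (∀ p ∈ σ, dist p c ≤ r) ∧ ∀ c' r', (∀ p ∈ σ, dist p c' ≤ r') → r ≤ r'

/-- `σ` is a Delaunay simplex of the point set `Q`: some circumscribing sphere of `σ`
bounds a ball containing no point of `Q` in its interior. -/
def IsDelaunay (Q : Set (Euc N)) (σ : Finset (Euc N)) : Prop :=
  (σ : Set (Euc N)) ⊆ Q ∧ ∃ z r, IsCircum σ z r ∧ ∀ q ∈ Q, r ≤ dist q z

/-- Separation of a point set: infimum of pairwise distances. -/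
def sep (X : Set (Euc N)) : ℝ :=
  sInf {r | ∃ x ∈ X, ∃ y ∈ X, x ≠ y ∧ r = dist x y}

/-- A relation is a multiplicative `M`-distortion. -/
def MulDistortion (R : Set (Euc N × Euc N)) (M : ℝ) : Prop :=
  ∀ p ∈ R, ∀ q ∈ R,
    (1 / (1 + M)) * dist p.1 q.1 ≤ dist p.2 q.2 ∧ dist p.2 q.2 ≤ (1 + M) * dist p.1 q.1

/-- A relation is an additive `A`-distortion. -/
def AddDistortion (R : Set (Euc N × Euc N)) (A : ℝ) : Prop :=
  ∀ p ∈ R, ∀ q ∈ R, |dist p.2 q.2 - dist p.1 q.1| ≤ A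

/-- A relation is one-to-one: injective and functional. -/
def OneToOneRel (R : Set (Euc N × Euc N)) : Prop :=
  (∀ p ∈ R, ∀ q ∈ R, p.2 = q.2 → p.1 = q.1) ∧ (∀ p ∈ R, ∀ q ∈ R, p.1 = q.1 → p.2 = q.2)

/-- `M` is a `C²` `d`-dimensional submanifold of `ℝᴺ` with tangent spaces given by `T`. -/
def IsC2Submanifold (d : ℕ) (M : Set (Euc N)) (T : Euc N → Submodule ℝ (Euc N)) : Prop :=
  ∀ m ∈ M, ∃ (φ : EuclideanSpace ℝ (Fin d) → Euc N) (U : Set (Euc N)),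
    IsOpen U ∧ m ∈ U ∧ ContDiff ℝ 2 φ ∧ Function.Injective φ ∧
    (∀ x, Function.Injective (fderiv ℝ φ x)) ∧
    Set.range φ = M ∩ U ∧
    ∀ x, T (φ x) = LinearMap.range ((fderiv ℝ φ x).toLinearMap)

/-- The family of affine spaces associated to a simplex `σ`: the affine hull of `σ`
together with the tangent spaces at projections of points of `Conv σ` onto `M`. -/
def stdFamily (σ : Finset (Euc N)) (T : Euc N → Submodule ℝ (Euc N)) (πM : Euc N → Euc N) :
    Set (AffineSubspace ℝ (Euc N)) :=
  insert (affineSpan ℝ (σ : Set (Euc N)))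
    ((fun x => AffineSubspace.mk' (πM x) (T (πM x))) '' convexHull ℝ (σ : Set (Euc N)))

end


section AuxLemmas
variable {N : ℕ}

lemma projA_mem {H : AffineSubspace ℝ (Euc N)} (hne : (H : Set (Euc N)).Nonempty)
    (x : Euc N) : projA H x ∈ H := by
  simp only [projA, dif_pos hne]
  have ha : hne.choose ∈ H := hne.choose_spec
  have hm : (Submodule.orthogonalProjection H.direction (x - hne.choose) : Euc N) ∈ H.direction :=
    (Submodule.orthogonalProjection H.direction (x - hne.choose)).2
  simpa [vadd_eq_add, add_comm] using AffineSubspace.vadd_mem_of_mem_direction hm ha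

lemma projA_eq_self {H : AffineSubspace ℝ (Euc N)} {x : Euc N} (hx : x ∈ H) :
    projA H x = x := by
  have hne : (H : Set (Euc N)).Nonempty := ⟨x, hx⟩
  simp only [projA, dif_pos hne]
  have ha : hne.choose ∈ H := hne.choose_spec
  have hd : x - hne.choose ∈ H.direction := by
    simpa [vsub_eq_sub] using AffineSubspace.vsub_mem_direction hx ha
  rw [show ((Submodule.orthogonalProjection H.direction (x - hne.choose)) : Euc N) = x - hne.choose from Submodule.starProjection_eq_self_iff.mpr hd]
  abel

lemma projA_inner {H : AffineSubspace ℝ (Euc N)} (hne : (H : Set (Euc N)).Nonempty)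
    (x : Euc N) {v : Euc N} (hv : v ∈ H.direction) :
    inner ℝ (x - projA H x) v = (0:ℝ) := by
  simp only [projA, dif_pos hne]
  have heq : x - (hne.choose + ↑(Submodule.orthogonalProjection H.direction (x - hne.choose)))
      = (x - hne.choose) - ↑(Submodule.orthogonalProjection H.direction (x - hne.choose)) := by abel
  rw [heq]
  have := Submodule.sub_starProjection_mem_orthogonal (K := H.direction) (x - hne.choose)
  rw [real_inner_comm]
  exact this v hv

lemma dist_sq_projA {H : AffineSubspace ℝ (Euc N)} (hne : (H : Set (Euc N)).Nonempty)
    {q : Euc N} (hq : q ∈ H) (x : Euc N) :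
    dist x q ^ 2 = dist (projA H x) q ^ 2 + dist x (projA H x) ^ 2 := by
  have hp := projA_mem hne x
  have hv : projA H x - q ∈ H.direction := by
    simpa [vsub_eq_sub] using AffineSubspace.vsub_mem_direction hp hq
  have hinner := projA_inner hne x hv
  have hx : x - q = (x - projA H x) + (projA H x - q) := by abel
  rw [dist_eq_norm, dist_eq_norm, dist_eq_norm, hx, norm_add_sq_real, hinner]
  ring


lemma seb_dist_le {σ : Finset (Euc N)} (hne : σ.Nonempty) {c z : Euc N} {rc r : ℝ}
    (hseb : IsSEB σ c rc) (hcirc : IsCircum σ z r) : dist c z ≤ r := by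
  by_contra hlt
  push_neg at hlt
  obtain ⟨p₀, hp₀⟩ := hne
  have hr0 : 0 ≤ r := (hcirc p₀ hp₀) ▸ dist_nonneg
  have hrc0 : 0 ≤ rc := dist_nonneg.trans (hseb.1 p₀ hp₀)
  set D : ℝ := dist c z with hD
  have hD0 : 0 < D := hr0.trans_lt hlt
  set c' : Euc N := z + (r / D) • (c - z) with hc'
  have hDnorm : ‖c - z‖ = D := by rw [hD, dist_eq_norm]
  have key : ∀ p ∈ σ, dist p c' ^ 2 ≤ rc ^ 2 - (D - r) ^ 2 := by
    intro p hp
    have hpz : ‖p - z‖ = r := by rw [← dist_eq_norm]; exact hcirc p hp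
    have hI : inner ℝ (p - z) (c - z) ≤ r * D := by
      calc (inner ℝ (p - z) (c - z) : ℝ) ≤ ‖p - z‖ * ‖c - z‖ := real_inner_le_norm _ _
        _ = r * D := by rw [hpz, hDnorm]
    have hpc : dist p c ^ 2 = r ^ 2 - 2 * inner ℝ (p - z) (c - z) + D ^ 2 := by
      have : p - c = (p - z) - (c - z) := by abel
      rw [dist_eq_norm, this, norm_sub_sq_real, hpz, hDnorm]
    have hpcle : dist p c ^ 2 ≤ rc ^ 2 :=
      pow_le_pow_left₀ dist_nonneg (hseb.1 p hp) 2
    have hpc' : dist p c' ^ 2 = r ^ 2 - 2 * (r / D) * inner ℝ (p - z) (c - z)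
        + (r / D) ^ 2 * D ^ 2 := by
      have h1 : p - c' = (p - z) - (r / D) • (c - z) := by rw [hc']; abel
      rw [dist_eq_norm, h1, norm_sub_sq_real, real_inner_smul_right, norm_smul, hpz, hDnorm]
      have : |r / D| = r / D := abs_of_nonneg (div_nonneg hr0 hD0.le)
      rw [Real.norm_eq_abs, this]
      ring
    have hfrac : (r / D) * D = r := div_mul_cancel₀ r hD0.ne'
    set I : ℝ := inner ℝ (p - z) (c - z) with hIdef
    have hsq2 : (r / D) ^ 2 * D ^ 2 = r ^ 2 := by rw [← mul_pow, hfrac]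
    have h2 : dist p c' ^ 2 = 2 * r ^ 2 - 2 * (r / D) * I := by rw [hpc']; linarith
    have hpcle' : r ^ 2 - 2 * I + D ^ 2 ≤ rc ^ 2 := by rw [← hpc]; exact hpcle
    have hmul : D * (2 * r ^ 2 - 2 * (r / D) * I) = 2 * r ^ 2 * D - 2 * r * I := by
      rw [mul_sub, show D * (2 * (r / D) * I) = 2 * ((r / D) * D) * I by ring, hfrac]
      ring
    rw [h2, ← mul_le_mul_iff_right₀ hD0, hmul]
    nlinarith [mul_nonneg hD0.le (sub_nonneg.mpr hpcle'),
      mul_nonneg (sub_nonneg.mpr hI) (sub_nonneg.mpr hlt.le)]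
  set R' : ℝ := Real.sqrt (rc ^ 2 - (D - r) ^ 2) with hR'
  have hle : ∀ p ∈ σ, dist p c' ≤ R' := by
    intro p hp
    have h1 := key p hp
    have : dist p c' = Real.sqrt (dist p c' ^ 2) := (Real.sqrt_sq dist_nonneg).symm
    rw [this, hR']
    exact Real.sqrt_le_sqrt h1
  have hRle : rc ≤ R' := hseb.2 c' R' hle
  have hnn : 0 ≤ rc ^ 2 - (D - r) ^ 2 := (sq_nonneg _).trans (key p₀ hp₀)
  have hsq : R' ^ 2 = rc ^ 2 - (D - r) ^ 2 := Real.sq_sqrt hnn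
  nlinarith [pow_le_pow_left₀ hrc0 hRle 2]

lemma circum_unique {σ : Finset (Euc N)} {z₁ z₂ : Euc N} {r₁ r₂ : ℝ}
    (h₁ : IsCircum σ z₁ r₁) (h₂ : IsCircum σ z₂ r₂)
    (hz₁ : z₁ ∈ affineSpan ℝ (σ : Set (Euc N))) (hz₂ : z₂ ∈ affineSpan ℝ (σ : Set (Euc N))) :
    z₁ = z₂ := by
  have hmem : z₁ - z₂ ∈ vectorSpan ℝ (σ : Set (Euc N)) := by
    have := AffineSubspace.vsub_mem_direction hz₁ hz₂
    rwa [direction_affineSpan] at this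
  have horth : z₁ - z₂ ∈ (vectorSpan ℝ (σ : Set (Euc N)))ᗮ := by
    rw [Submodule.mem_orthogonal, vectorSpan_def]
    intro u hu
    induction hu using Submodule.span_induction with
    | mem u hu =>
      obtain ⟨p, hp, q, hq, rfl⟩ := hu
      have e1 : ‖p - z₁‖ ^ 2 = ‖q - z₁‖ ^ 2 := by
        rw [← dist_eq_norm, ← dist_eq_norm, h₁ p hp, h₁ q hq]
      have e2 : ‖p - z₂‖ ^ 2 = ‖q - z₂‖ ^ 2 := by
        rw [← dist_eq_norm, ← dist_eq_norm, h₂ p hp, h₂ q hq]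
      show (inner ℝ (p - q) (z₁ - z₂) : ℝ) = 0
      simp only [norm_sub_sq_real] at e1 e2
      simp only [inner_sub_left, inner_sub_right]
      linarith
    | zero => simp
    | add u v _ _ hu hv => rw [inner_add_left]; rw [hu, hv]; ring
    | smul a u _ hu => rw [real_inner_smul_left, hu]; ring
  have : z₁ - z₂ = 0 := by
    have h0 : (inner ℝ (z₁ - z₂) (z₁ - z₂) : ℝ) = 0 :=
      (Submodule.mem_orthogonal _ _).mp horth _ hmem
    exact inner_self_eq_zero.mp h0
  linear_combination (norm := module) this

lemma circumcenter_mem_span {σ : Finset (Euc N)} (hne : σ.Nonempty) {z : Euc N} {r : ℝ}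
    (hmc : IsMinCircum σ z r) : z ∈ affineSpan ℝ (σ : Set (Euc N)) := by
  obtain ⟨p₀, hp₀⟩ := hne
  set H := affineSpan ℝ (σ : Set (Euc N)) with hHdef
  have hHne : (H : Set (Euc N)).Nonempty := ⟨p₀, subset_affineSpan ℝ _ hp₀⟩
  set z₀ := projA H z with hz₀
  have hpyth : ∀ p ∈ σ, dist z p ^ 2 = dist z₀ p ^ 2 + dist z z₀ ^ 2 := fun p hp =>
    dist_sq_projA hHne (subset_affineSpan ℝ _ hp) z
  have hr0 : 0 ≤ r := (hmc.1 p₀ hp₀) ▸ dist_nonneg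
  have hnn : 0 ≤ r ^ 2 - dist z z₀ ^ 2 := by
    have := hpyth p₀ hp₀
    rw [dist_comm, hmc.1 p₀ hp₀] at this
    nlinarith [sq_nonneg (dist z₀ p₀)]
  have hcirc : IsCircum σ z₀ (Real.sqrt (r ^ 2 - dist z z₀ ^ 2)) := by
    intro p hp
    have := hpyth p hp
    rw [dist_comm, hmc.1 p hp] at this
    rw [dist_comm]
    rw [show dist z₀ p = Real.sqrt (dist z₀ p ^ 2) from (Real.sqrt_sq dist_nonneg).symm]
    congr 1
    linarith
  have hle := hmc.2 _ _ hcirc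
  have hsq : Real.sqrt (r ^ 2 - dist z z₀ ^ 2) ^ 2 = r ^ 2 - dist z z₀ ^ 2 := Real.sq_sqrt hnn
  have hz0 : dist z z₀ = 0 := by
    nlinarith [pow_le_pow_left₀ hr0 hle 2, dist_nonneg (x := z) (y := z₀)]
  have : z = z₀ := by rwa [dist_eq_zero] at hz0
  rw [this]
  exact projA_mem hHne z

end AuxLemmas


theorem delloc_implies_gabriel (N d : ℕ) (P σ : Finset (Euc N))
    (hσP : σ ⊆ P) (hσ : Nondegenerate σ) (hcard : σ.card = d + 1)
    (ρ : ℝ) (c : Euc N) (rc : ℝ) (hseb : IsSEB σ c rc)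
    (z : Euc N) (r : ℝ) (hmc : IsMinCircum σ z r)
    (hdelloc : IsDelaunay
      (projA (affineSpan ℝ (σ : Set (Euc N))) '' ((P : Set (Euc N)) ∩ closedBall c ρ))
      (σ.image (projA (affineSpan ℝ (σ : Set (Euc N))))))
    (h2R : 2 * r ≤ ρ) :
    (∀ p ∈ P, r ≤ dist p z) ∧ IsDelaunay (P : Set (Euc N)) σ := by
  classical
  have hne : σ.Nonempty := Finset.card_pos.mp (by rw [hcard]; omega)
  obtain ⟨p₀, hp₀⟩ := hne
  set H := affineSpan ℝ (σ : Set (Euc N)) with hHdef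
  have hσH : ∀ p ∈ σ, p ∈ H := fun p hp => subset_affineSpan ℝ _ hp
  have hHne : (H : Set (Euc N)).Nonempty := ⟨p₀, hσH p₀ hp₀⟩
  have himg : σ.image (projA H) = σ := by
    apply Finset.ext
    intro x
    simp only [Finset.mem_image]
    constructor
    · rintro ⟨y, hy, rfl⟩
      rw [projA_eq_self (hσH y hy)]
      exact hy
    · intro hx
      exact ⟨x, hx, projA_eq_self (hσH x hx)⟩
  have hzH : z ∈ H := circumcenter_mem_span ⟨p₀, hp₀⟩ hmc
  have hr0 : 0 ≤ r := (hmc.1 p₀ hp₀) ▸ dist_nonneg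
  have hcz : dist c z ≤ r := seb_dist_le ⟨p₀, hp₀⟩ hseb hmc.1
  obtain ⟨-, z', r', hcirc', hdel'⟩ := hdelloc
  rw [himg] at hcirc'
  have hr'0 : 0 ≤ r' := (hcirc' p₀ hp₀) ▸ dist_nonneg
  set z'' := projA H z' with hz''def
  have hz''H : z'' ∈ H := projA_mem hHne z'
  set h' : ℝ := dist z' z'' with hh'
  have hpyth : ∀ p ∈ σ, r' ^ 2 = dist z'' p ^ 2 + h' ^ 2 := by
    intro p hp
    have := dist_sq_projA hHne (hσH p hp) z'
    rw [dist_comm z' p, hcirc' p hp] at this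
    exact this
  have hnn : 0 ≤ r' ^ 2 - h' ^ 2 := by
    have := hpyth p₀ hp₀
    nlinarith [sq_nonneg (dist z'' p₀)]
  have hcirc'' : IsCircum σ z'' (Real.sqrt (r' ^ 2 - h' ^ 2)) := by
    intro p hp
    rw [show dist p z'' = Real.sqrt (dist p z'' ^ 2) from (Real.sqrt_sq dist_nonneg).symm]
    congr 1
    have := hpyth p hp
    rw [dist_comm z'' p] at this
    linarith
  have hzz'' : z = z'' := circum_unique hmc.1 hcirc'' hzH hz''H
  have hrel : r' ^ 2 = r ^ 2 + h' ^ 2 := by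
    have := hpyth p₀ hp₀
    rw [← hzz'', dist_comm z p₀, hmc.1 p₀ hp₀] at this
    exact this
  have key : ∀ p ∈ P, r ≤ dist p z := by
    intro p hp
    by_cases hball : dist p c ≤ ρ
    · have hqmem : projA H p ∈ projA H '' ((P : Set (Euc N)) ∩ closedBall c ρ) :=
        ⟨p, ⟨hp, Metric.mem_closedBall.mpr hball⟩, rfl⟩
      have hq := hdel' _ hqmem
      have hpy1 : dist z' (projA H p) ^ 2
          = dist z'' (projA H p) ^ 2 + h' ^ 2 := by
        have := dist_sq_projA hHne (projA_mem hHne p) z'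
        rw [← hz''def, ← hh'] at this
        exact this
      have hpy2 : dist p z ^ 2 = dist (projA H p) z ^ 2 + dist p (projA H p) ^ 2 :=
        dist_sq_projA hHne hzH p
      have h1 : r' ^ 2 ≤ dist z' (projA H p) ^ 2 := by
        rw [dist_comm]
        exact pow_le_pow_left₀ hr'0 hq 2
      have h2 : r ^ 2 ≤ dist (projA H p) z ^ 2 := by
        rw [dist_comm (projA H p) z, hzz'']
        nlinarith
      have h3 : r ^ 2 ≤ dist p z ^ 2 := by nlinarith [sq_nonneg (dist p (projA H p))]
      nlinarith [dist_nonneg (x := p) (y := z)]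
    · push_neg at hball
      have := dist_triangle p z c
      rw [dist_comm z c, dist_comm p c] at *
      linarith
  exact ⟨key, Finset.coe_subset.mpr hσP, z, r, hmc.1, key⟩
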